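/- With the operators x̂, ŷ, ẑ on K(X) as above (x̂ = multiplication by X + X⁻¹, ŷ = V(X)ϖ + V(X⁻¹)ϖ⁻¹, ẑ = q^{-1/2}X⁻¹V(X)ϖ + q^{-1/2}XV(X⁻¹)ϖ⁻¹, where ϖ(f)(X) = f(qX)), one has q^{1/2} ẑ x̂ - q^{-1/2} x̂ ẑ = (q - q⁻¹) ŷ. -/
import Mathlib


/-- The polynomial-representation operators `x̂, ŷ, ẑ` of the spherical DAHA of type `A₁`
on the function field `K(X)` (an abstract field `L` with automorphism `ϖ : X ↦ qX`)
satisfy `q^{1/2} ẑx̂ - q^{-1/2} x̂ẑ = (q - q⁻¹) ŷ`. -/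
theorem daha_A1_relation_zx (K L : Type*) [Field K] [CharZero K] [Field L] [Algebra K L]
    (q s p : K) (hq : q ≠ 0) (hs : s ≠ 0)
    (hqroot : ∀ n : ℕ, 0 < n → q ^ n ≠ 1) (hp : p ^ 2 = q)
    (X : L) (hX : X ≠ 0)
    (ϖ : L ≃ₐ[K] L) (hϖX : ϖ X = algebraMap K L q * X)
    (V V' : L)
    (hV : V = (algebraMap K L s * X - (algebraMap K L s)⁻¹ * X⁻¹) / (X - X⁻¹))
    (hV' : V' = (algebraMap K L s * X⁻¹ - (algebraMap K L s)⁻¹ * X) / (X⁻¹ - X))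
    (xop yop zop : L → L)
    (hx : ∀ f, xop f = (X + X⁻¹) * f)
    (hy : ∀ f, yop f = V * ϖ f + V' * ϖ.symm f)
    (hz : ∀ f, zop f = (algebraMap K L p)⁻¹ * X⁻¹ * V * ϖ f
      + (algebraMap K L p)⁻¹ * X * V' * ϖ.symm f) :
    ∀ f : L,
      algebraMap K L p * zop (xop f) - (algebraMap K L p)⁻¹ * xop (zop f)
        = (algebraMap K L q - (algebraMap K L q)⁻¹) * yop f := by
  subst hp
  intro f
  have hp0 : p ≠ 0 := fun h => hq (by rw [h]; ring)
  have hp' : (algebraMap K L) p ≠ 0 := by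
    simpa using (algebraMap K L).injective.ne_iff.mpr hp0
  have hq' : (algebraMap K L) (p ^ 2) ≠ 0 := by
    rw [map_pow]; exact pow_ne_zero 2 hp'
  have hϖX' : ϖ.symm X = ((algebraMap K L) (p ^ 2))⁻¹ * X := by
    apply ϖ.injective
    rw [AlgEquiv.apply_symm_apply, map_mul, map_inv₀, ϖ.commutes, hϖX]
    field_simp
  have h1 : ϖ ((X + X⁻¹) * f)
      = ((algebraMap K L) (p ^ 2) * X + ((algebraMap K L) (p ^ 2) * X)⁻¹) * ϖ f := by
    rw [map_mul, map_add, map_inv₀, hϖX]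
  have h2 : ϖ.symm ((X + X⁻¹) * f)
      = (((algebraMap K L) (p ^ 2))⁻¹ * X + (((algebraMap K L) (p ^ 2))⁻¹ * X)⁻¹) * ϖ.symm f := by
    rw [map_mul, map_add, map_inv₀, hϖX']
  have hb : (algebraMap K L) p * ((algebraMap K L) p)⁻¹ = 1 := mul_inv_cancel₀ hp'
  have hY : X * X⁻¹ = 1 := mul_inv_cancel₀ hX
  simp only [hx, hy, hz, h1, h2, map_pow, mul_inv, inv_inv, inv_pow]
  linear_combination
    (V * ϖ f * ((algebraMap K L) p ^ 2 * X * X⁻¹ + ((algebraMap K L) p)⁻¹ ^ 2 * X⁻¹ ^ 2)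
      + V' * ϖ.symm f * (((algebraMap K L) p)⁻¹ ^ 2 * X ^ 2
        + (algebraMap K L) p ^ 2 * X * X⁻¹)) * hb
    + (((algebraMap K L) p ^ 2 - ((algebraMap K L) p)⁻¹ ^ 2)
        * (V * ϖ f + V' * ϖ.symm f)) * hY
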